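/- In the errors-in-variables model, suppose E|X|^j < ∞, E|U|^j < ∞ for all 0 ≤ j ≤ J, E|g(X)|·(1+|X|+|U|)^J is integrable, and E|ε|·(1+|X|+|U|)^J is integrable. With ν_k = E(U^k) (so ν_0 = 1), for every 0 ≤ j ≤ J one has E(Y X^j) = Σ_{k=0}^{j} C(j,k) · E(Y W^{j−k}) · P_k(ν_0, …, ν_k). -/

import Mathlib

open MeasureTheory ProbabilityTheory Filter

lemma choose_swap (j k i : ℕ) : j.choose k * (j-k).choose i = j.choose i * (j-i).choose k := by
  by_cases h : k + i ≤ j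
  · have h1 := Nat.choose_mul (n := j) (Nat.le_add_left i k)
    have h2 := Nat.choose_mul (n := j) (Nat.le_add_right k i)
    have hs : (k+i).choose i = (k+i).choose k := by
      rw [← Nat.choose_symm (Nat.le_add_left i k)]
      congr 1; omega
    rw [Nat.add_sub_cancel] at h1
    rw [Nat.add_sub_cancel_left] at h2
    rw [← h1, ← h2, hs, Nat.mul_comm]
  · rcases le_or_gt k j with hk | hk
    · rcases le_or_gt i j with hi | hi
      · rw [Nat.choose_eq_zero_of_lt (by omega : j - k < i),
            Nat.choose_eq_zero_of_lt (by omega : j - i < k)]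
        ring
      · rw [Nat.choose_eq_zero_of_lt hi, Nat.choose_eq_zero_of_lt (by omega : j - k < i)]
        ring
    · rw [Nat.choose_eq_zero_of_lt hk, Nat.choose_eq_zero_of_lt (by omega : j - i < k)]
      ring

lemma conv_inv (ν Q : ℕ → ℝ) (hν0 : ν 0 = 1) (hQ0 : Q 0 = (ν 0)⁻¹)
    (hQrec : ∀ j : ℕ, 1 ≤ j →
      ν 0 * Q j = -∑ k ∈ Finset.range j, (j.choose k : ℝ) * ν (j - k) * Q k)
    (b a : ℕ → ℝ) (j : ℕ)
    (ha : ∀ m ≤ j, a m = ∑ i ∈ Finset.range (m+1), (m.choose i : ℝ) * b i * ν (m - i)) :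
    ∑ k ∈ Finset.range (j+1), (j.choose k : ℝ) * a (j-k) * Q k = b j := by
  have hD : ∀ n, ∑ k ∈ Finset.range (n+1), (n.choose k : ℝ) * ν (n-k) * Q k
      = if n = 0 then 1 else 0 := by
    intro n
    match n with
    | 0 => simp [hQ0, hν0]
    | (m+1) =>
      have h := hQrec (m+1) (Nat.succ_le_succ (Nat.zero_le m))
      rw [Finset.sum_range_succ, if_neg (Nat.succ_ne_zero m)]
      simp only [Nat.choose_self, Nat.cast_one, Nat.sub_self, one_mul]
      linarith [h]
  have pad : ∀ (n : ℕ) (f : ℕ → ℝ), n ≤ j → (∀ i, n < i → f i = 0) →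
      ∑ i ∈ Finset.range (n+1), f i = ∑ i ∈ Finset.range (j+1), f i := by
    intro n f hn hf
    refine Finset.sum_subset (Finset.range_subset_range.mpr (by omega)) ?_
    intro i hi hni
    exact hf i (by simp at hi hni; omega)
  calc ∑ k ∈ Finset.range (j+1), (j.choose k : ℝ) * a (j-k) * Q k
      = ∑ k ∈ Finset.range (j+1), ∑ i ∈ Finset.range (j+1),
          (j.choose k : ℝ) * (((j-k).choose i : ℝ) * b i * ν (j-k-i)) * Q k := by
        refine Finset.sum_congr rfl fun k hk => ?_
        rw [ha (j-k) (Nat.sub_le j k),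
          pad (j-k) (fun i => ((j-k).choose i : ℝ) * b i * ν (j-k-i)) (Nat.sub_le j k)
            (fun i hi => by simp [Nat.choose_eq_zero_of_lt hi]),
          Finset.mul_sum, Finset.sum_mul]
    _ = ∑ i ∈ Finset.range (j+1), ∑ k ∈ Finset.range (j+1),
          b i * ((j.choose i : ℝ) * (((j-i).choose k : ℝ) * ν (j-i-k) * Q k)) := by
        rw [Finset.sum_comm]
        refine Finset.sum_congr rfl fun i _ => Finset.sum_congr rfl fun k _ => ?_
        have hc : (j.choose k : ℝ) * ((j-k).choose i : ℝ)
            = (j.choose i : ℝ) * ((j-i).choose k : ℝ) := by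
          exact_mod_cast congrArg (fun n : ℕ => (n : ℝ)) (choose_swap j k i)
        have hsub : j - k - i = j - i - k := by omega
        rw [hsub]
        linear_combination b i * ν (j - i - k) * Q k * hc
    _ = ∑ i ∈ Finset.range (j+1), b i * ((j.choose i : ℝ) * (if j - i = 0 then 1 else 0)) := by
        refine Finset.sum_congr rfl fun i hi => ?_
        rw [← Finset.mul_sum, ← Finset.mul_sum]
        congr 2
        rw [← pad (j-i) (fun k => ((j-i).choose k : ℝ) * ν (j-i-k) * Q k) (Nat.sub_le j i)
            (fun k hk => by simp [Nat.choose_eq_zero_of_lt hk])]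
        exact hD (j-i)
    _ = b j := by
        rw [Finset.sum_eq_single j]
        · simp
        · intro i hi hij
          rw [if_neg (by simp at hi; omega)]
          ring
        · intro h
          exact absurd (Finset.self_mem_range_succ j) h

/-- In the errors-in-variables model `Y = g(X) + ε`, `W = X + U`,
with `U` independent of `X` and `E(ε | U, X) = 0`, under the stated moment
conditions, `E(Y X^j) = ∑_{k=0}^{j} C(j,k) E(Y W^{j-k}) P_k(ν_0, …, ν_k)`
for all `j ≤ J`, where `ν_k = E(U^k)` and the `P_j` satisfy the recursion
`P_0(x_0) = x_0⁻¹`, `x_0 P_j(x_0,…,x_j) = -∑_{k<j} C(j,k) x_{j-k} P_k(x_0,…,x_k)`. -/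
theorem statement1
    {Ω : Type*} [MeasureSpace Ω] [IsProbabilityMeasure (ℙ : Measure Ω)]
    (J : ℕ) (X U ε : Ω → ℝ) (g : ℝ → ℝ)
    (hX : Measurable X) (hU : Measurable U) (hε : Measurable ε) (hg : Measurable g)
    (hindep : IndepFun X U ℙ)
    (hcond : ℙ[ε | MeasurableSpace.comap (fun ω => (X ω, U ω)) inferInstance] =ᵐ[ℙ] 0)
    (hXmom : ∀ j ≤ J, Integrable (fun ω => |X ω| ^ j) ℙ)
    (hUmom : ∀ j ≤ J, Integrable (fun ω => |U ω| ^ j) ℙ)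
    (hgint : Integrable (fun ω => |g (X ω)| * (1 + |X ω| + |U ω|) ^ J) ℙ)
    (hεint : Integrable (fun ω => |ε ω| * (1 + |X ω| + |U ω|) ^ J) ℙ)
    (Y W : Ω → ℝ) (hY : ∀ ω, Y ω = g (X ω) + ε ω) (hW : ∀ ω, W ω = X ω + U ω)
    (ν : ℕ → ℝ) (hν : ∀ k, ν k = ∫ ω, (U ω) ^ k ∂ℙ)
    (P : ℕ → (ℕ → ℝ) → ℝ)
    (hP0 : ∀ x : ℕ → ℝ, P 0 x = (x 0)⁻¹)
    (hPrec : ∀ j : ℕ, 1 ≤ j → ∀ x : ℕ → ℝ,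
      x 0 * P j x = -∑ k ∈ Finset.range j, (j.choose k : ℝ) * x (j - k) * P k x) :
    ∀ j ≤ J, (∫ ω, Y ω * (X ω) ^ j ∂ℙ)
      = ∑ k ∈ Finset.range (j + 1),
          (j.choose k : ℝ) * (∫ ω, Y ω * (W ω) ^ (j - k) ∂ℙ) * P k ν := by
  have hXU : Measurable fun ω => (X ω, U ω) := hX.prodMk hU
  have hm : MeasurableSpace.comap (fun ω => (X ω, U ω)) inferInstance
      ≤ (MeasureSpace.toMeasurableSpace : MeasurableSpace Ω) := hXU.comap_le
  have hbase : ∀ ω, (1:ℝ) ≤ 1 + |X ω| + |U ω| := fun ω => by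
    nlinarith [abs_nonneg (X ω), abs_nonneg (U ω)]
  have hb0 : ∀ ω, (0:ℝ) ≤ 1 + |X ω| + |U ω| := fun ω => le_trans zero_le_one (hbase ω)
  have hpow : ∀ (i l : ℕ), i + l ≤ J → ∀ ω,
      |X ω ^ i * U ω ^ l| ≤ (1 + |X ω| + |U ω|) ^ J := by
    intro i l hil ω
    rw [abs_mul, abs_pow, abs_pow]
    calc |X ω| ^ i * |U ω| ^ l
        ≤ (1 + |X ω| + |U ω|) ^ i * (1 + |X ω| + |U ω|) ^ l := by
          have h1 : |X ω| ≤ 1 + |X ω| + |U ω| := by nlinarith [abs_nonneg (U ω)]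
          have h2 : |U ω| ≤ 1 + |X ω| + |U ω| := by nlinarith [abs_nonneg (X ω)]
          exact mul_le_mul (pow_le_pow_left₀ (abs_nonneg _) h1 i)
            (pow_le_pow_left₀ (abs_nonneg _) h2 l)
            (pow_nonneg (abs_nonneg _) l) (pow_nonneg (hb0 ω) i)
      _ = (1 + |X ω| + |U ω|) ^ (i + l) := (pow_add _ i l).symm
      _ ≤ (1 + |X ω| + |U ω|) ^ J := pow_le_pow_right₀ (hbase ω) hil
  have measXU : ∀ (i l : ℕ), Measurable fun ω => X ω ^ i * U ω ^ l :=
    fun i l => (hX.pow_const i).mul (hU.pow_const l)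
  -- integrability of g(X)·X^i·U^l
  have hgXU : ∀ i l, i + l ≤ J → Integrable (fun ω => g (X ω) * (X ω ^ i * U ω ^ l)) ℙ := by
    intro i l hil
    refine hgint.mono (((hg.comp hX).mul (measXU i l)).aestronglyMeasurable)
      (ae_of_all _ fun ω => ?_)
    simp only [Real.norm_eq_abs, abs_mul, abs_abs, abs_of_nonneg (pow_nonneg (hb0 ω) J)]
    refine mul_le_mul_of_nonneg_left ?_ (abs_nonneg _)
    rw [← abs_mul]
    exact hpow i l hil ω
  have hεXU : ∀ i l, i + l ≤ J → Integrable (fun ω => ε ω * (X ω ^ i * U ω ^ l)) ℙ := by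
    intro i l hil
    refine hεint.mono ((hε.mul (measXU i l)).aestronglyMeasurable)
      (ae_of_all _ fun ω => ?_)
    simp only [Real.norm_eq_abs, abs_mul, abs_abs, abs_of_nonneg (pow_nonneg (hb0 ω) J)]
    refine mul_le_mul_of_nonneg_left ?_ (abs_nonneg _)
    rw [← abs_mul]
    exact hpow i l hil ω
  -- E(ε · X^i · U^l) = 0
  have hεzero : ∀ i l, i + l ≤ J → ∫ ω, ε ω * (X ω ^ i * U ω ^ l) ∂ℙ = 0 := by
    intro i l hil
    have hε1 : Integrable ε ℙ := by
      refine hεint.mono hε.aestronglyMeasurable (ae_of_all _ fun ω => ?_)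
      simp only [Real.norm_eq_abs, abs_mul, abs_abs, abs_of_nonneg (pow_nonneg (hb0 ω) J)]
      exact le_mul_of_one_le_right (abs_nonneg _) (one_le_pow₀ (hbase ω))
    have hsm : StronglyMeasurable[MeasurableSpace.comap (fun ω => (X ω, U ω)) inferInstance]
        (fun ω => X ω ^ i * U ω ^ l) := by
      have hXUm : Measurable[MeasurableSpace.comap (fun ω => (X ω, U ω)) inferInstance]
          (fun ω => (X ω, U ω)) :=
        Measurable.of_comap_le le_rfl
      exact (((measurable_fst.pow_const i).mul (measurable_snd.pow_const l)).comp
        hXUm).stronglyMeasurable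
    have hint : Integrable ((fun ω => X ω ^ i * U ω ^ l) * ε) ℙ := by
      refine (hεXU i l hil).congr (ae_of_all _ fun ω => ?_)
      simp [Pi.mul_apply, mul_comm]
    have h1 := condExp_mul_of_stronglyMeasurable_left hsm hint hε1
    have h2 : (fun ω => X ω ^ i * U ω ^ l)
        * (MeasureTheory.condExp
            (MeasurableSpace.comap (fun ω => (X ω, U ω)) inferInstance) ℙ ε) =ᵐ[ℙ] 0 := by
      filter_upwards [hcond] with ω hω
      simp only [Pi.mul_apply, Pi.zero_apply] at hω ⊢
      rw [hω, mul_zero]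
    calc ∫ ω, ε ω * (X ω ^ i * U ω ^ l) ∂ℙ
        = ∫ ω, ((fun ω => X ω ^ i * U ω ^ l) * ε) ω ∂ℙ := by
          refine integral_congr_ae (ae_of_all _ fun ω => ?_)
          simp [Pi.mul_apply, mul_comm]
      _ = ∫ ω, (ℙ[(fun ω => X ω ^ i * U ω ^ l) * ε
            | MeasurableSpace.comap (fun ω => (X ω, U ω)) inferInstance]) ω ∂ℙ :=
          (integral_condExp (μ := ℙ) hm).symm
      _ = 0 := by
          rw [integral_congr_ae (h1.trans h2)]
          simp
  -- Integrable U^l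
  have hUl : ∀ l, l ≤ J → Integrable (fun ω => U ω ^ l) ℙ := by
    intro l hl
    refine (hUmom l hl).mono ((hU.pow_const l).aestronglyMeasurable)
      (ae_of_all _ fun ω => ?_)
    simp [abs_pow]
  -- independence factorization
  have hmul : ∀ i l, i ≤ J → l ≤ J →
      ∫ ω, g (X ω) * (X ω ^ i * U ω ^ l) ∂ℙ = (∫ ω, g (X ω) * X ω ^ i ∂ℙ) * ν l := by
    intro i l hi hl
    have intg : Integrable (fun ω => g (X ω) * X ω ^ i) ℙ := by
      have := hgXU i 0 (by omega)
      simpa using this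
    have hif := (hindep.comp (hg.mul (measurable_id.pow_const i))
      (measurable_id.pow_const l)).integral_mul_eq_mul_integral intg.aestronglyMeasurable (hUl l hl).aestronglyMeasurable
    calc ∫ ω, g (X ω) * (X ω ^ i * U ω ^ l) ∂ℙ
        = ∫ ω, ((fun ω => g (X ω) * X ω ^ i) * (fun ω => U ω ^ l)) ω ∂ℙ := by
          refine integral_congr_ae (ae_of_all _ fun ω => ?_)
          simp [Pi.mul_apply, mul_assoc]
      _ = (∫ ω, g (X ω) * X ω ^ i ∂ℙ) * (∫ ω, U ω ^ l ∂ℙ) := hif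
      _ = (∫ ω, g (X ω) * X ω ^ i ∂ℙ) * ν l := by rw [hν l]
  -- E(Y X^i) = E(g(X) X^i)
  have hYX : ∀ i, i ≤ J → ∫ ω, Y ω * X ω ^ i ∂ℙ = ∫ ω, g (X ω) * X ω ^ i ∂ℙ := by
    intro i hi
    have e : ∀ ω, Y ω * X ω ^ i
        = g (X ω) * (X ω ^ i * U ω ^ 0) + ε ω * (X ω ^ i * U ω ^ 0) := fun ω => by
      rw [hY ω]; ring
    rw [integral_congr_ae (ae_of_all _ e),
      integral_add (hgXU i 0 (by omega)) (hεXU i 0 (by omega)),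
      hεzero i 0 (by omega), add_zero]
    refine integral_congr_ae (ae_of_all _ fun ω => ?_)
    simp
  -- E(Y W^n) expansion
  have haW : ∀ n, n ≤ J → ∫ ω, Y ω * W ω ^ n ∂ℙ
      = ∑ i ∈ Finset.range (n+1),
          (n.choose i : ℝ) * (∫ ω, Y ω * X ω ^ i ∂ℙ) * ν (n - i) := by
    intro n hn
    have e : ∀ ω, Y ω * W ω ^ n = ∑ i ∈ Finset.range (n+1),
        ((g (X ω) * (X ω ^ i * U ω ^ (n-i)) + ε ω * (X ω ^ i * U ω ^ (n-i)))
          * (n.choose i : ℝ)) := by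
      intro ω
      rw [hW ω, add_pow, Finset.mul_sum]
      refine Finset.sum_congr rfl fun i hi => ?_
      rw [hY ω]; push_cast; ring
    rw [integral_congr_ae (ae_of_all _ e), integral_finset_sum]
    · refine Finset.sum_congr rfl fun i hi => ?_
      have hil : i + (n - i) ≤ J := by
        simp only [Finset.mem_range] at hi; omega
      rw [integral_mul_const, integral_add (hgXU i (n-i) hil) (hεXU i (n-i) hil),
        hεzero i (n-i) hil, add_zero, hmul i (n-i) (by omega) (by omega),
        hYX i (by omega)]
      ring
    · intro i hi
      have hil : i + (n - i) ≤ J := by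
        simp only [Finset.mem_range] at hi; omega
      exact ((hgXU i (n-i) hil).add (hεXU i (n-i) hil)).mul_const _
  intro j hj
  have key := conv_inv ν (fun k => P k ν) (by rw [hν 0]; simp) (hP0 ν)
      (fun n hn => hPrec n hn ν)
      (fun i => ∫ ω, Y ω * X ω ^ i ∂ℙ) (fun n => ∫ ω, Y ω * W ω ^ n ∂ℙ) j
      (fun n hn => haW n (le_trans hn hj))
  exact key.symm
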